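/- arXiv:1608.02999 — 3 statements merged into one kernel-verified Lean document; each statement's English description precedes it below -/
import Mathlib

section
/- Suppose ν: G × G → V is continuous and satisfies the 2-cocycle identity ν(g₁g₂, g₃) + ν(g₁, g₂) = ν(g₁, g₂g₃) + ρ(g₁)(ν(g₂, g₃)) for all g₁, g₂, g₃ ∈ G. Then d(Hν) = ν; that is, for all g₁, g₂ ∈ G one has (Hν)(g₁) − (Hν)(g₁g₂) + ρ(g₁)((Hν)(g₂)) = ν(g₁, g₂). -/
open MeasureTheory

/-- If `ν : G × G → V` is a continuous 2-cocycle for the representation `ρ` on a compact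
group `G` with right-invariant Haar probability measure `μ`, then `d(Hν) = ν`, where
`(Hν)(g) = ∫ x, ρ(x)⁻¹ (ν(x,g)) dμ(x)`. -/
theorem coboundary_of_averaged_cocycle
    {G V : Type*}
    [Group G] [TopologicalSpace G] [IsTopologicalGroup G] [CompactSpace G] [T2Space G]
    [MeasurableSpace G] [BorelSpace G]
    (μ : Measure G) [IsProbabilityMeasure μ] [μ.IsMulRightInvariant]
    [NormedAddCommGroup V] [NormedSpace ℝ V] [FiniteDimensional ℝ V]
    (ρ : G →* (V →ₗ[ℝ] V)ˣ)
    (hρ : Continuous fun p : G × V => (ρ p.1 : V →ₗ[ℝ] V) p.2)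
    (ν : G × G → V) (hν : Continuous ν)
    (hcocycle : ∀ g₁ g₂ g₃ : G,
      ν (g₁ * g₂, g₃) + ν (g₁, g₂) = ν (g₁, g₂ * g₃) + (ρ g₁ : V →ₗ[ℝ] V) (ν (g₂, g₃))) :
    ∀ g₁ g₂ : G,
      (∫ x, (((ρ x)⁻¹ : (V →ₗ[ℝ] V)ˣ) : V →ₗ[ℝ] V) (ν (x, g₁)) ∂μ)
        - (∫ x, (((ρ x)⁻¹ : (V →ₗ[ℝ] V)ˣ) : V →ₗ[ℝ] V) (ν (x, g₁ * g₂)) ∂μ)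
        + (ρ g₁ : V →ₗ[ℝ] V) (∫ x, (((ρ x)⁻¹ : (V →ₗ[ℝ] V)ˣ) : V →ₗ[ℝ] V) (ν (x, g₂)) ∂μ)
        = ν (g₁, g₂) := by
  intro g₁ g₂
  set A : G → V →ₗ[ℝ] V := fun x => (((ρ x)⁻¹ : (V →ₗ[ℝ] V)ˣ) : V →ₗ[ℝ] V) with hAdef
  have hA : ∀ x : G, A x = ((ρ x⁻¹ : (V →ₗ[ℝ] V)ˣ) : V →ₗ[ℝ] V) := by
    intro x; simp only [hAdef]; rw [map_inv]
  have contA : ∀ {w : G → V}, Continuous w → Continuous (fun x => A x (w x)) := by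
    intro w hw
    simp only [hA]
    exact hρ.comp (continuous_inv.prodMk hw)
  have integ : ∀ {w : G → V}, Continuous w → Integrable (fun x => A x (w x)) μ := by
    intro w hw
    exact (contA hw).integrable_of_hasCompactSupport (HasCompactSupport.of_compactSpace _)
  -- continuity of the various integrands
  have hc1 : Continuous fun x : G => ν (x, g₁) :=
    hν.comp (continuous_id.prodMk continuous_const)
  have hc2 : Continuous fun x : G => ν (x, g₂) :=
    hν.comp (continuous_id.prodMk continuous_const)
  have hc12 : Continuous fun x : G => ν (x, g₁ * g₂) :=
    hν.comp (continuous_id.prodMk continuous_const)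
  have hcs : Continuous fun x : G => ν (x * g₁, g₂) :=
    hν.comp ((continuous_id.mul continuous_const).prodMk continuous_const)
  -- the substitution identity
  have comp : ∀ (x : G) (v : V),
      (ρ g₁ : V →ₗ[ℝ] V) (A (x * g₁) v) = A x v := by
    intro x v
    have hg : g₁ * (x * g₁)⁻¹ = x⁻¹ := by group
    rw [hA, hA, ← Module.End.mul_apply, ← Units.val_mul, ← map_mul, hg]
  have hsub : (∫ x, A x (ν (x * g₁, g₂)) ∂μ)
      = (ρ g₁ : V →ₗ[ℝ] V) (∫ x, A x (ν (x, g₂)) ∂μ) := by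
    have hT : (∫ x, (ρ g₁ : V →ₗ[ℝ] V) (A x (ν (x, g₂))) ∂μ)
        = (ρ g₁ : V →ₗ[ℝ] V) (∫ x, A x (ν (x, g₂)) ∂μ) := by
      exact (LinearMap.toContinuousLinearMap
        (ρ g₁ : V →ₗ[ℝ] V)).integral_comp_comm (integ hc2)
    calc (∫ x, A x (ν (x * g₁, g₂)) ∂μ)
        = ∫ x, (ρ g₁ : V →ₗ[ℝ] V) (A (x * g₁) (ν (x * g₁, g₂))) ∂μ := by
          simp_rw [comp]
      _ = ∫ x, (ρ g₁ : V →ₗ[ℝ] V) (A x (ν (x, g₂))) ∂μ :=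
          integral_mul_right_eq_self (fun y => (ρ g₁ : V →ₗ[ℝ] V) (A y (ν (y, g₂)))) g₁
      _ = (ρ g₁ : V →ₗ[ℝ] V) (∫ x, A x (ν (x, g₂)) ∂μ) := hT
  -- pointwise identity from the cocycle relation
  have point : ∀ x : G,
      A x (ν (x * g₁, g₂)) + A x (ν (x, g₁))
        = A x (ν (x, g₁ * g₂)) + ν (g₁, g₂) := by
    intro x
    have h := congrArg (A x) (hcocycle x g₁ g₂)
    have hinv : A x ((ρ x : V →ₗ[ℝ] V) (ν (g₁, g₂))) = ν (g₁, g₂) := by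
      rw [hAdef, ← Module.End.mul_apply, ← Units.val_mul, inv_mul_cancel,
        Units.val_one, Module.End.one_apply]
    simpa [map_add, hinv] using h
  -- integrate the pointwise identity
  have hint : (∫ x, A x (ν (x * g₁, g₂)) ∂μ) + (∫ x, A x (ν (x, g₁)) ∂μ)
      = (∫ x, A x (ν (x, g₁ * g₂)) ∂μ) + ν (g₁, g₂) := by
    have l : (∫ x, (A x (ν (x * g₁, g₂)) + A x (ν (x, g₁))) ∂μ)
        = (∫ x, A x (ν (x * g₁, g₂)) ∂μ) + (∫ x, A x (ν (x, g₁)) ∂μ) :=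
      integral_add (integ hcs) (integ hc1)
    have r : (∫ x, (A x (ν (x, g₁ * g₂)) + ν (g₁, g₂)) ∂μ)
        = (∫ x, A x (ν (x, g₁ * g₂)) ∂μ) + ν (g₁, g₂) := by
      rw [integral_add (integ hc12) (integrable_const _), integral_const]
      simp
    rw [← l, ← r]
    exact integral_congr_ae (Filter.Eventually.of_forall point)
  rw [hsub] at hint
  rw [sub_add_eq_add_sub, add_comm, hint, add_sub_cancel_left]
end

section
/- Suppose ν: G × G → V is continuous, satisfies ν(g, e) = 0 = ν(e, g) for all g ∈ G, and satisfies the 2-cocycle identity ν(g₁g₂, g₃) + ν(g₁, g₂) = ν(g₁, g₂g₃) + ρ(g₁)(ν(g₂, g₃)) for all g₁, g₂, g₃ ∈ G. Then there exists a continuous function μ': G → V with μ'(e) = 0 such that for all g₁, g₂ ∈ G: μ'(g₁) − μ'(g₁g₂) + ρ(g₁)(μ'(g₂)) = ν(g₁, g₂). In other words, every continuous normalized 2-cocycle on a compact group with values in a continuous finite-dimensional real representation is the coboundary of a continuous normalized 1-cochain. -/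
open MeasureTheory

/-- A right-invariant probability measure on a compact group is also left-invariant. -/
lemma aux_isMulLeftInvariant
    {G : Type*} [Group G] [TopologicalSpace G] [IsTopologicalGroup G] [CompactSpace G] [T2Space G]
    [MeasurableSpace G] [BorelSpace G]
    (μ : Measure G) [IsProbabilityMeasure μ] [μ.IsMulRightInvariant] :
    μ.IsMulLeftInvariant := by
  constructor
  intro g
  have hinv : IsProbabilityMeasure μ.inv :=
    Measure.isProbabilityMeasure_map measurable_inv.aemeasurable
  have h1 : μ.inv.IsHaarMeasure := by
    have : μ.inv.IsOpenPosMeasure :=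
      isOpenPosMeasure_of_mulLeftInvariant_of_compact Set.univ isCompact_univ (by simp)
    constructor
  set ν := Measure.map (fun x => g * x) μ with hν
  have hνr : ν.IsMulRightInvariant := by
    rw [hν]; infer_instance
  have hνp : IsProbabilityMeasure ν :=
    Measure.isProbabilityMeasure_map (measurable_const_mul g).aemeasurable
  have hνinv : IsProbabilityMeasure ν.inv :=
    Measure.isProbabilityMeasure_map measurable_inv.aemeasurable
  have h2 : ν.inv.IsHaarMeasure := by
    have : ν.inv.IsOpenPosMeasure :=
      isOpenPosMeasure_of_mulLeftInvariant_of_compact Set.univ isCompact_univ (by simp)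
    constructor
  have := Measure.isHaarMeasure_eq_of_isProbabilityMeasure ν.inv μ.inv
  calc ν = ν.inv.inv := (Measure.inv_inv ν).symm
    _ = μ.inv.inv := by rw [this]
    _ = μ := Measure.inv_inv μ

/-- Integration against a probability measure is a `1`-Lipschitz map on continuous functions
on a compact space. -/
lemma aux_lipschitz_integral {X V : Type*} [TopologicalSpace X] [CompactSpace X]
    [MeasurableSpace X] [BorelSpace X] [T2Space X]
    [NormedAddCommGroup V] [NormedSpace ℝ V] [CompleteSpace V]
    (μ : Measure X) [IsProbabilityMeasure μ] :
    LipschitzWith 1 (fun f : C(X, V) => ∫ x, f x ∂μ) := by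
  apply LipschitzWith.of_dist_le_mul
  intro f g
  rw [dist_eq_norm, NNReal.coe_one, one_mul, ← integral_sub
    (f.continuous.integrable_of_hasCompactSupport (HasCompactSupport.of_compactSpace _))
    (g.continuous.integrable_of_hasCompactSupport (HasCompactSupport.of_compactSpace _))]
  calc ‖∫ x, (f x - g x) ∂μ‖ ≤ dist f g * (μ Set.univ).toReal := by
        apply norm_integral_le_of_norm_le_const
        filter_upwards with x
        rw [← dist_eq_norm]
        exact ContinuousMap.dist_apply_le_dist x
    _ = dist f g := by simp

/-- Every continuous normalized 2-cocycle on a compact group with values in a continuous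
finite-dimensional real representation is the coboundary of a continuous normalized
1-cochain. -/
theorem continuous_cocycle_is_coboundary
    {G V : Type*}
    [Group G] [TopologicalSpace G] [IsTopologicalGroup G] [CompactSpace G] [T2Space G]
    [MeasurableSpace G] [BorelSpace G]
    (μ : Measure G) [IsProbabilityMeasure μ] [μ.IsMulRightInvariant]
    [NormedAddCommGroup V] [NormedSpace ℝ V] [FiniteDimensional ℝ V]
    (ρ : G →* (V →ₗ[ℝ] V)ˣ)
    (hρ : Continuous fun p : G × V => (ρ p.1 : V →ₗ[ℝ] V) p.2)
    (ν : G × G → V) (hν : Continuous ν)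
    (hnorm : ∀ g : G, ν (g, 1) = 0 ∧ ν (1, g) = 0)
    (hcocycle : ∀ g₁ g₂ g₃ : G,
      ν (g₁ * g₂, g₃) + ν (g₁, g₂) = ν (g₁, g₂ * g₃) + (ρ g₁ : V →ₗ[ℝ] V) (ν (g₂, g₃))) :
    ∃ μ' : G → V, Continuous μ' ∧ μ' 1 = 0 ∧
      ∀ g₁ g₂ : G,
        μ' g₁ - μ' (g₁ * g₂) + (ρ g₁ : V →ₗ[ℝ] V) (μ' g₂) = ν (g₁, g₂) := by
  haveI hli : μ.IsMulLeftInvariant := aux_isMulLeftInvariant μ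
  have hcont1 : ∀ g : G, Continuous fun h => ν (g, h) :=
    fun g => hν.comp (continuous_const.prodMk continuous_id)
  have hint : ∀ (f : G → V), Continuous f → Integrable f μ := fun f hf =>
    hf.integrable_of_hasCompactSupport (HasCompactSupport.of_compactSpace f)
  refine ⟨fun g => ∫ h, ν (g, h) ∂μ, ?_, ?_, ?_⟩
  · have : (fun g => ∫ h, ν (g, h) ∂μ)
        = (fun f : C(G, V) => ∫ x, f x ∂μ) ∘ (ContinuousMap.curry ⟨ν, hν⟩) := rfl
    rw [this]
    exact (aux_lipschitz_integral μ).continuous.comp (ContinuousMap.curry ⟨ν, hν⟩).continuous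
  · simp [(hnorm _).2]
  · intro g₁ g₂
    have e1 : ∀ h : G, (ρ g₁ : V →ₗ[ℝ] V) (ν (g₂, h))
        = ν (g₁ * g₂, h) + ν (g₁, g₂) - ν (g₁, g₂ * h) := fun h =>
      eq_sub_of_add_eq (by rw [add_comm]; exact (hcocycle g₁ g₂ h).symm)
    have e2 : ∫ h, (ρ g₁ : V →ₗ[ℝ] V) (ν (g₂, h)) ∂μ
        = (∫ h, ν (g₁ * g₂, h) ∂μ) + ν (g₁, g₂) - ∫ h, ν (g₁, h) ∂μ := by
      rw [show (fun h => (ρ g₁ : V →ₗ[ℝ] V) (ν (g₂, h)))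
          = fun h => ν (g₁ * g₂, h) + ν (g₁, g₂) - ν (g₁, g₂ * h) from funext e1]
      have i1 : Integrable (fun h => ν (g₁ * g₂, h) + ν (g₁, g₂)) μ :=
        (hint _ (hcont1 (g₁ * g₂))).add (integrable_const _)
      have i2 : Integrable (fun h => ν (g₁, g₂ * h)) μ :=
        hint _ ((hcont1 g₁).comp (continuous_const.mul continuous_id))
      rw [integral_sub i1 i2,
        integral_add (hint _ (hcont1 (g₁ * g₂))) (integrable_const _),
        integral_mul_left_eq_self (fun h => ν (g₁, h)) g₂]
      simp
    have hρg : (ρ g₁ : V →ₗ[ℝ] V) (∫ h, ν (g₂, h) ∂μ)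
        = ∫ h, (ρ g₁ : V →ₗ[ℝ] V) (ν (g₂, h)) ∂μ := by
      have := ((ρ g₁ : V →ₗ[ℝ] V).toContinuousLinearMap).integral_comp_comm
        (hint _ (hcont1 g₂))
      simpa using this.symm
    rw [hρg, e2]
    abel
end

section
/- Let G be a compact Hausdorff topological group with a right-invariant Borel probability (Haar) measure, V a finite-dimensional real vector space regarded as an additive topological group, H a topological group, ε: V → H a continuous group homomorphism, and α: H → GL(V), ρ: G → GL(V) group homomorphisms whose action maps H × V → V and G × V → V are continuous, such that ε(α(h)(v)) = h ε(v) h⁻¹ for all h ∈ H, v ∈ V, and α(ε(v)) = id_V for all v ∈ V. Let E_ρ be the subspace of C(G,H) × C(G×G,V) (compact-open topologies) consisting of pairs (ζ, ν) of continuous maps satisfying: (1) ζ(e) = e and ν(g,e) = 0 = ν(e,g) for all g; (2) ζ(g₁g₂) = ε(ν(g₁,g₂)) ζ(g₁) ζ(g₂); (3) ν(g₁g₂,g₃) + ν(g₁,g₂) = ν(g₁,g₂g₃) + ρ(g₁)(ν(g₂,g₃)); (4) α(ζ(g)) = ρ(g) for all g. Let E⁰_ρ = {(ζ, ν) ∈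 E_ρ : ν = 0}. Then E⁰_ρ is a strong deformation retract of E_ρ: there exists a continuous map K: [0,1] × E_ρ → E_ρ with K(0, x) = x for all x ∈ E_ρ, K(t, x) = x for all t ∈ [0,1] and x ∈ E⁰_ρ, and K(1, x) ∈ E⁰_ρ for all x ∈ E_ρ. -/
open MeasureTheory

/-- The defining conditions for a point of the space `E_ρ ⊆ C(G,H) × C(G×G,V)`:
(1) normalization, (2) `ζ(g₁g₂) = ε(ν(g₁,g₂)) ζ(g₁) ζ(g₂)`, (3) the 2-cocycle identity
for `ν`, and (4) `α ∘ ζ = ρ`. -/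
def IsCocyclePair {G H V : Type*}
    [Group G] [TopologicalSpace G] [Group H] [TopologicalSpace H]
    [NormedAddCommGroup V] [NormedSpace ℝ V]
    (ε : V → H) (α : H →* (V →ₗ[ℝ] V)ˣ) (ρ : G →* (V →ₗ[ℝ] V)ˣ)
    (p : C(G, H) × C(G × G, V)) : Prop :=
  (p.1 1 = 1 ∧ ∀ g : G, p.2 (g, 1) = 0 ∧ p.2 (1, g) = 0)
  ∧ (∀ g₁ g₂ : G, p.1 (g₁ * g₂) = ε (p.2 (g₁, g₂)) * p.1 g₁ * p.1 g₂)
  ∧ (∀ g₁ g₂ g₃ : G, p.2 (g₁ * g₂, g₃) + p.2 (g₁, g₂)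
      = p.2 (g₁, g₂ * g₃) + (ρ g₁ : V →ₗ[ℝ] V) (p.2 (g₂, g₃)))
  ∧ (∀ g : G, α (p.1 g) = ρ g)

/-- The subspace `E⁰_ρ = {(ζ,ν) ∈ E_ρ : ν = 0}` is a strong deformation retract of
`E_ρ`, for a compact group `G` with right-invariant Haar probability measure, a
finite-dimensional real representation `V`, and crossed-module data `(ε, α)` over a
topological group `H`. -/
theorem cocycle_pair_strong_deformation_retract
    {G H V : Type*}
    [Group G] [TopologicalSpace G] [IsTopologicalGroup G] [CompactSpace G] [T2Space G]
    [MeasurableSpace G] [BorelSpace G]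
    (μ : Measure G) [IsProbabilityMeasure μ] [μ.IsMulRightInvariant]
    [Group H] [TopologicalSpace H] [IsTopologicalGroup H]
    [NormedAddCommGroup V] [NormedSpace ℝ V] [FiniteDimensional ℝ V]
    (ε : V → H) (hε_cont : Continuous ε)
    (hε_hom : ∀ v w : V, ε (v + w) = ε v * ε w)
    (α : H →* (V →ₗ[ℝ] V)ˣ) (ρ : G →* (V →ₗ[ℝ] V)ˣ)
    (hα_cont : Continuous fun p : H × V => (α p.1 : V →ₗ[ℝ] V) p.2)
    (hρ_cont : Continuous fun p : G × V => (ρ p.1 : V →ₗ[ℝ] V) p.2)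
    (hεα : ∀ (h : H) (v : V), ε ((α h : V →ₗ[ℝ] V) v) = h * ε v * h⁻¹)
    (hαε : ∀ v : V, α (ε v) = 1) :
    ∃ K : unitInterval × {p : C(G, H) × C(G × G, V) // IsCocyclePair ε α ρ p}
        → {p : C(G, H) × C(G × G, V) // IsCocyclePair ε α ρ p},
      Continuous K
      ∧ (∀ x, K (0, x) = x)
      ∧ (∀ (t : unitInterval) x, x.1.2 = 0 → K (t, x) = x)
      ∧ (∀ x, (K (1, x)).1.2 = 0) := by
  classical
  -- the representation as continuous linear maps
  set T : G → V →L[ℝ] V := fun x => LinearMap.toContinuousLinearMap (ρ x : V →ₗ[ℝ] V) with hT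
  have hT_app : ∀ (x : G) (v : V), T x v = (ρ x : V →ₗ[ℝ] V) v := fun x v => rfl
  have hT_cont : Continuous fun p : G × V => T p.1 p.2 := hρ_cont
  have hT_mul : ∀ (x y : G) (v : V), T (x * y) v = T x (T y v) := by
    intro x y v
    simp only [hT_app, map_mul, Units.val_mul, Module.End.mul_apply]
  have hT_inv : ∀ (x : G) (v : V), T x⁻¹ (T x v) = v := by
    intro x v
    rw [← hT_mul, inv_mul_cancel]
    simp [hT_app]
  -- uniform bound on ‖T x⁻¹‖ via Banach-Steinhaus
  obtain ⟨C, hC⟩ : ∃ C, ∀ x : G, ‖T x⁻¹‖ ≤ C := by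
    apply banach_steinhaus
    intro v
    have hc : Continuous fun x : G => ‖T x⁻¹ v‖ :=
      (hT_cont.comp ((continuous_inv).prodMk continuous_const)).norm
    obtain ⟨x₀, -, hx₀⟩ := isCompact_univ.exists_isMaxOn (Set.univ_nonempty) hc.continuousOn
    exact ⟨‖T x₀⁻¹ v‖, fun x => hx₀ (Set.mem_univ x)⟩
  have hC0 : 0 ≤ C := le_trans (norm_nonneg _) (hC 1)
  -- integrability of continuous functions
  have hInt : ∀ f : G → V, Continuous f → Integrable f μ := fun f hf =>
    hf.integrable_of_hasCompactSupport (HasCompactSupport.of_compactSpace f)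
  have hcont_integrand : ∀ (w : G → V), Continuous w → Continuous fun x : G => T x⁻¹ (w x) := by
    intro w hw
    exact hT_cont.comp (continuous_inv.prodMk hw)
  -- the integration functional
  set Ilin : C(G, V) →ₗ[ℝ] V :=
    { toFun := fun w => ∫ x, T x⁻¹ (w x) ∂μ
      map_add' := by
        intro w w'
        show (∫ x, T x⁻¹ ((w + w') x) ∂μ) = _
        simp only [ContinuousMap.add_apply, map_add]
        exact integral_add (hInt _ (hcont_integrand _ w.continuous))
          (hInt _ (hcont_integrand _ w'.continuous))
      map_smul' := by
        intro c w
        show (∫ x, T x⁻¹ ((c • w) x) ∂μ) = _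
        simp only [ContinuousMap.smul_apply, _root_.map_smul, RingHom.id_apply]
        exact integral_smul c _ } with hIlin
  have hIbound : ∀ w : C(G, V), ‖Ilin w‖ ≤ C * ‖w‖ := by
    intro w
    have := norm_integral_le_of_norm_le_const (μ := μ) (f := fun x => T x⁻¹ (w x))
      (C := C * ‖w‖) (by
        filter_upwards with x
        calc ‖T x⁻¹ (w x)‖ ≤ ‖T x⁻¹‖ * ‖w x‖ := (T x⁻¹).le_opNorm _
          _ ≤ C * ‖w‖ := mul_le_mul (hC x) (w.norm_coe_le_norm _) (norm_nonneg _) hC0)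
    simp at this; exact this
  set I : C(G, V) →L[ℝ] V := Ilin.mkContinuous C hIbound with hI
  have hI_app : ∀ w : C(G, V), I w = ∫ x, T x⁻¹ (w x) ∂μ := fun w => rfl
  -- the averaging operator Φ
  set swapm : C(G × G, G × G) := ⟨Prod.swap, continuous_swap⟩ with hswapm
  set Φ : C(G × G, V) → C(G, V) :=
    fun ν => ContinuousMap.comp ⟨I, I.continuous⟩ ((ν.comp swapm).curry) with hΦ
  have hΦapp : ∀ (ν : C(G × G, V)) (g : G), Φ ν g = ∫ x, T x⁻¹ (ν (x, g)) ∂μ := fun ν g => rfl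
  have hΦcont : Continuous Φ := by
    apply (ContinuousMap.continuous_postcomp _).comp
    exact ContinuousMap.continuous_curry.comp (ContinuousMap.continuous_precomp swapm)
  have hΦzero : Φ 0 = 0 := by
    ext g
    rw [hΦapp]
    simp
  -- ε 0 = 1
  have hε0 : ε 0 = 1 := by
    have h := hε_hom 0 0
    rw [add_zero] at h
    exact (left_eq_mul.mp h)
  -- key identity : d(Φν) = ν for a cocycle ν
  have hdPhi : ∀ (ν : C(G × G, V)),
      (∀ g₁ g₂ g₃ : G, ν (g₁ * g₂, g₃) + ν (g₁, g₂)
        = ν (g₁, g₂ * g₃) + (ρ g₁ : V →ₗ[ℝ] V) (ν (g₂, g₃))) →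
      ∀ g₂ g₃ : G, Φ ν g₂ - Φ ν (g₂ * g₃) + (ρ g₂ : V →ₗ[ℝ] V) (Φ ν g₃) = ν (g₂, g₃) := by
    intro ν h3 g₂ g₃
    have c1 : Continuous fun x : G => T x⁻¹ (ν (x * g₂, g₃)) :=
      hcont_integrand _ (ν.continuous.comp ((continuous_mul_right g₂).prodMk continuous_const))
    have c2 : Continuous fun x : G => T x⁻¹ (ν (x, g₂)) :=
      hcont_integrand _ (ν.continuous.comp (continuous_id.prodMk continuous_const))
    have c3 : Continuous fun x : G => T x⁻¹ (ν (x, g₂ * g₃)) :=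
      hcont_integrand _ (ν.continuous.comp (continuous_id.prodMk continuous_const))
    have c4 : Continuous fun x : G => T x⁻¹ (T x (ν (g₂, g₃))) :=
      hcont_integrand _ (hT_cont.comp (continuous_id.prodMk continuous_const))
    -- integrate the cocycle identity
    have key : (∫ x, T x⁻¹ (ν (x * g₂, g₃)) ∂μ) + (∫ x, T x⁻¹ (ν (x, g₂)) ∂μ)
        = (∫ x, T x⁻¹ (ν (x, g₂ * g₃)) ∂μ) + ∫ x, T x⁻¹ (T x (ν (g₂, g₃))) ∂μ := by
      rw [← integral_add (hInt _ c1) (hInt _ c2), ← integral_add (hInt _ c3) (hInt _ c4)]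
      congr 1
      funext x
      have h' := congrArg (T x⁻¹) (h3 x g₂ g₃)
      rw [map_add, map_add] at h'
      simpa only [hT_app] using h'
    -- step A : translation invariance
    have stepA : (∫ x, T x⁻¹ (ν (x * g₂, g₃)) ∂μ) = T g₂ (Φ ν g₃) := by
      have e1 : (fun x : G => T x⁻¹ (ν (x * g₂, g₃)))
          = fun x : G => (fun y : G => T (g₂ * y⁻¹) (ν (y, g₃))) (x * g₂) := by
        funext x
        simp only [mul_inv_rev]
        congr 2
        group
      rw [e1, integral_mul_right_eq_self (fun y : G => T (g₂ * y⁻¹) (ν (y, g₃))) g₂]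
      have e2 : (fun y : G => T (g₂ * y⁻¹) (ν (y, g₃)))
          = fun y : G => T g₂ (T y⁻¹ (ν (y, g₃))) := by
        funext y
        rw [hT_mul]
      have c5 : Continuous fun y : G => T y⁻¹ (ν (y, g₃)) :=
        hcont_integrand _ (ν.continuous.comp (continuous_id.prodMk continuous_const))
      rw [e2, (T g₂).integral_comp_comm (hInt _ c5), hΦapp]
    -- step B : the constant term
    have stepB : (∫ x, T x⁻¹ (T x (ν (g₂, g₃))) ∂μ) = ν (g₂, g₃) := by
      have e : (fun x : G => T x⁻¹ (T x (ν (g₂, g₃)))) = fun _ : G => ν (g₂, g₃) := by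
        funext x
        exact hT_inv x _
      rw [e, integral_const]
      simp
    rw [stepA, stepB] at key
    rw [hΦapp ν g₂, hΦapp ν (g₂ * g₃), ← hT_app g₂ (Φ ν g₃)]
    have : (∫ x, T x⁻¹ (ν (x, g₂)) ∂μ) - (∫ x, T x⁻¹ (ν (x, g₂ * g₃)) ∂μ) + T g₂ (Φ ν g₃)
        = (T g₂ (Φ ν g₃) + ∫ x, T x⁻¹ (ν (x, g₂)) ∂μ) - ∫ x, T x⁻¹ (ν (x, g₂ * g₃)) ∂μ := by
      abel
    rw [this, key]
    abel
  -- Φ ν vanishes at 1 when ν is normalized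
  have hΦone : ∀ ν : C(G × G, V), (∀ g : G, ν (g, 1) = 0) → Φ ν 1 = 0 := by
    intro ν hν
    rw [hΦapp]
    have : (fun x : G => T x⁻¹ (ν (x, 1))) = fun _ : G => (0 : V) := by
      funext x
      rw [hν x, map_zero]
    rw [this]
    simp
  -- the commutation rule  ζ(g) ε(v) = ε(ρ(g) v) ζ(g)
  have hcomm : ∀ (ζ : C(G, H)), (∀ g : G, α (ζ g) = ρ g) →
      ∀ (g : G) (v : V), ζ g * ε v = ε ((ρ g : V →ₗ[ℝ] V) v) * ζ g := by
    intro ζ h4 g v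
    have h := hεα (ζ g) v
    rw [h4 g] at h
    rw [h]
    group
  -- data of the homotopy
  set εc : C(V, H) := ⟨ε, hε_cont⟩ with hεc
  set Kfun : ℝ → C(G, H) × C(G × G, V) → C(G, H) × C(G × G, V) :=
    fun t p => (εc.comp (t • Φ p.2) * p.1, (1 - t) • p.2) with hKfun
  have hKapp1 : ∀ (t : ℝ) (p : C(G, H) × C(G × G, V)) (g : G),
      (Kfun t p).1 g = ε (t • Φ p.2 g) * p.1 g := fun t p g => rfl
  have hKapp2 : ∀ (t : ℝ) (p : C(G, H) × C(G × G, V)) (q : G × G),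
      (Kfun t p).2 q = (1 - t) • p.2 q := fun t p q => rfl
  -- the image stays in E_ρ
  have himg : ∀ (t : ℝ) (p : C(G, H) × C(G × G, V)), IsCocyclePair ε α ρ p →
      IsCocyclePair ε α ρ (Kfun t p) := by
    rintro t ⟨ζ, ν⟩ ⟨⟨h1ζ, h1ν⟩, h2, h3, h4⟩
    have hΦ1 : Φ ν 1 = 0 := hΦone ν fun g => (h1ν g).1
    refine ⟨⟨?_, ?_⟩, ?_, ?_, ?_⟩
    · rw [hKapp1]
      simp only [hΦ1, smul_zero, hε0, h1ζ, one_mul]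
    · intro g
      constructor
      · rw [hKapp2]
        simp only [(h1ν g).1, smul_zero]
      · rw [hKapp2]
        simp only [(h1ν g).2, smul_zero]
    · intro g₁ g₂
      rw [hKapp1, hKapp1, hKapp1, hKapp2]
      have D : Φ ν (g₁ * g₂) = Φ ν g₁ + (ρ g₁ : V →ₗ[ℝ] V) (Φ ν g₂) - ν (g₁, g₂) := by
        have := hdPhi ν h3 g₁ g₂
        rw [← this]
        abel
      have expeq : t • Φ ν (g₁ * g₂) + ν (g₁, g₂)
          = (1 - t) • ν (g₁, g₂) + (t • Φ ν g₁ + t • (ρ g₁ : V →ₗ[ℝ] V) (Φ ν g₂)) := by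
        rw [D, smul_sub, smul_add, sub_smul, one_smul]
        abel
      calc ε (t • Φ ν (g₁ * g₂)) * (ζ : C(G, H)) (g₁ * g₂)
          = ε (t • Φ ν (g₁ * g₂)) * (ε (ν (g₁, g₂)) * ζ g₁ * ζ g₂) := by rw [h2]
        _ = ε (t • Φ ν (g₁ * g₂) + ν (g₁, g₂)) * ζ g₁ * ζ g₂ := by
            rw [hε_hom]; simp only [mul_assoc]
        _ = ε ((1 - t) • ν (g₁, g₂) + (t • Φ ν g₁ + t • (ρ g₁ : V →ₗ[ℝ] V) (Φ ν g₂)))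
              * ζ g₁ * ζ g₂ := by rw [expeq]
        _ = ε ((1 - t) • ν (g₁, g₂)) * ε (t • Φ ν g₁) * ε (t • (ρ g₁ : V →ₗ[ℝ] V) (Φ ν g₂))
              * ζ g₁ * ζ g₂ := by rw [hε_hom, hε_hom]; simp only [mul_assoc]
        _ = ε ((1 - t) • ν (g₁, g₂)) * (ε (t • Φ ν g₁) * ζ g₁) * (ε (t • Φ ν g₂) * ζ g₂) := by
            have hc : ζ g₁ * ε (t • Φ ν g₂)
                = ε ((ρ g₁ : V →ₗ[ℝ] V) (t • Φ ν g₂)) * ζ g₁ := hcomm ζ h4 g₁ _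
            rw [_root_.map_smul] at hc
            simp only [mul_assoc]
            have hassoc : ζ g₁ * (ε ((t : ℝ) • Φ ν g₂) * ζ g₂)
                = ε ((t : ℝ) • (ρ g₁ : V →ₗ[ℝ] V) (Φ ν g₂)) * (ζ g₁ * ζ g₂) := by
              rw [← mul_assoc, hc, mul_assoc]
            rw [hassoc]
    · intro g₁ g₂ g₃
      rw [hKapp2, hKapp2, hKapp2, hKapp2, _root_.map_smul, ← smul_add, ← smul_add, h3]
    · intro g
      rw [hKapp1, map_mul, hαε, one_mul, h4]
  -- assemble the retraction
  refine ⟨fun q => ⟨Kfun (q.1 : ℝ) (q.2 : {p : C(G, H) × C(G × G, V) // _}).1,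
      himg _ _ q.2.2⟩, ?_, ?_, ?_, ?_⟩
  · apply Continuous.subtype_mk
    have hproj1 : Continuous fun q : unitInterval ×
        {p : C(G, H) × C(G × G, V) // IsCocyclePair ε α ρ p} => q.2.1.1 :=
      continuous_fst.comp (continuous_subtype_val.comp continuous_snd)
    have hproj2 : Continuous fun q : unitInterval ×
        {p : C(G, H) × C(G × G, V) // IsCocyclePair ε α ρ p} => q.2.1.2 :=
      continuous_snd.comp (continuous_subtype_val.comp continuous_snd)
    have hprojt : Continuous fun q : unitInterval ×
        {p : C(G, H) × C(G × G, V) // IsCocyclePair ε α ρ p} => (q.1 : ℝ) :=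
      continuous_subtype_val.comp continuous_fst
    apply Continuous.prodMk
    · exact ((ContinuousMap.continuous_postcomp εc).comp
        (hprojt.smul (hΦcont.comp hproj2))).mul hproj1
    · exact (continuous_const.sub hprojt).smul hproj2
  · intro x
    apply Subtype.ext
    show Kfun ((0 : unitInterval) : ℝ) x.1 = x.1
    have h0 : ((0 : unitInterval) : ℝ) = 0 := rfl
    rw [h0]
    apply Prod.ext
    · ext g
      rw [hKapp1]
      simp [hε0]
    · show (1 - (0 : ℝ)) • x.1.2 = x.1.2
      simp
  · rintro t ⟨⟨ζ, ν⟩, hp⟩ hx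
    simp only at hx
    apply Subtype.ext
    show Kfun (t : ℝ) (ζ, ν) = (ζ, ν)
    subst hx
    apply Prod.ext
    · ext g
      rw [hKapp1]
      show ε ((t : ℝ) • Φ 0 g) * ζ g = ζ g
      rw [hΦzero]
      simp [hε0]
    · show (1 - (t : ℝ)) • (0 : C(G × G, V)) = 0
      simp
  · intro x
    show (1 - ((1 : unitInterval) : ℝ)) • x.1.2 = 0
    simp
end
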